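/- Let M₁, M₂, …, M_{n+1} be finite subsets of ℝⁿ such that the origin 0 lies in the convex hull of each Mᵢ. Then there exist points mᵢ ∈ Mᵢ (one from each set) such that 0 lies in the convex hull of {m₁, m₂, …, m_{n+1}}. -/

import Mathlib

open Metric Finset Module RealInnerProductSpace


private theorem equiv_image_convexHull {E F : Type*} [AddCommGroup E] [Module ℝ E]
    [AddCommGroup F] [Module ℝ F] (L : E ≃ₗ[ℝ] F) (s : Set E) :
    ⇑L '' (convexHull ℝ s) = convexHull ℝ (⇑L '' s) := by
  have := L.toLinearMap.image_convexHull s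
  simpa using this

private theorem colorful_aux (n : ℕ) (M : Fin (n + 1) → Finset (EuclideanSpace ℝ (Fin n)))
    (h : ∀ i, (0 : EuclideanSpace ℝ (Fin n)) ∈
      convexHull ℝ (↑(M i) : Set (EuclideanSpace ℝ (Fin n)))) :
    ∃ m : Fin (n + 1) → EuclideanSpace ℝ (Fin n), (∀ i, m i ∈ M i) ∧
      (0 : EuclideanSpace ℝ (Fin n)) ∈ convexHull ℝ (Set.range m) := by
  classical
  -- each M i is nonempty
  have hne : ∀ i, (M i).Nonempty := by
    intro i
    rw [← Finset.coe_nonempty, ← convexHull_nonempty_iff (𝕜 := ℝ)]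
    exact ⟨0, h i⟩
  -- pick a transversal minimizing the distance from 0 to the hull
  obtain ⟨m, hmmem, hmin⟩ := Finset.exists_min_image (Fintype.piFinset M)
    (fun m => infDist 0 (convexHull ℝ (Set.range m)))
    ⟨fun i => (hne i).choose, Fintype.mem_piFinset.2 fun i => (hne i).choose_spec⟩
  have hmM : ∀ i, m i ∈ M i := Fintype.mem_piFinset.1 hmmem
  set K : Set (EuclideanSpace ℝ (Fin n)) := convexHull ℝ (Set.range m) with hKdef
  have hKcomp : IsCompact K := (Set.finite_range m).isCompact_convexHull ℝ
  have hKne : K.Nonempty := by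
    rw [hKdef, convexHull_nonempty_iff]
    exact Set.range_nonempty m
  obtain ⟨x, hxK, hxdist⟩ := hKcomp.exists_infDist_eq_dist hKne 0
  by_cases hx0 : x = 0
  · exact ⟨m, hmM, hx0 ▸ hxK⟩
  -- the variational inequality for the nearest point
  have hnormsq : (0:ℝ) < ‖x‖ ^ 2 := by have := norm_pos_iff.mpr hx0; positivity
  have hvar : ∀ w ∈ K, ‖x‖ ^ 2 ≤ ⟪x, w⟫ := by
    have hiInf : ‖(0 : EuclideanSpace ℝ (Fin n)) - x‖ = ⨅ w : K, ‖(0 : EuclideanSpace ℝ (Fin n)) - (w : EuclideanSpace ℝ (Fin n))‖ := by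
      rw [infDist_eq_iInf] at hxdist
      simpa only [dist_eq_norm] using hxdist.symm
    have := (norm_eq_iInf_iff_real_inner_le_zero (convex_convexHull ℝ _) hxK).1 hiInf
    intro w hw
    have h2 := this w hw
    rw [zero_sub, inner_neg_left, inner_sub_right, neg_sub, sub_nonpos,
      real_inner_self_eq_norm_sq] at h2
    linarith [h2]
  -- write x as a positive convex combination of affinely independent points of the hull
  obtain ⟨ι, hι, z, w, hzr, hzaff, hwpos, hwsum, hzw⟩ :=
    eq_pos_convex_span_of_mem_convexHull hxK
  haveI hF : Fintype ι := hι
  rw [Subsingleton.elim hι hF] at hwsum hzw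
  have hzK : ∀ i, z i ∈ K := fun i => subset_convexHull ℝ _ (hzr (Set.mem_range_self i))
  have hge : ∀ i, ‖x‖ ^ 2 ≤ ⟪x, z i⟫ := fun i => hvar _ (hzK i)
  -- equality holds for each point with positive weight
  have heq : ∀ i, ⟪x, z i⟫ = ‖x‖ ^ 2 := by
    have hsum1 : ∑ i, w i * ⟪x, z i⟫ = ‖x‖ ^ 2 := by
      have : ⟪x, ∑ i, w i • z i⟫ = ∑ i, w i * ⟪x, z i⟫ := by
        rw [inner_sum]
        exact Finset.sum_congr rfl fun i _ => real_inner_smul_right x (z i) (w i)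
      rw [← this, hzw, real_inner_self_eq_norm_sq]
    have hsum2 : ∑ i, w i * ‖x‖ ^ 2 = ‖x‖ ^ 2 := by
      rw [← Finset.sum_mul, hwsum, one_mul]
    intro i
    have := (Finset.sum_eq_sum_iff_of_le
      (fun i _ => mul_le_mul_of_nonneg_left (hge i) (hwpos i).le)).1
      (by rw [hsum1, hsum2]) i (Finset.mem_univ i)
    have := mul_left_cancel₀ (hwpos i).ne' this
    linarith [this]
  -- the z i are affinely independent in a hyperplane, so there are at most n of them
  have hcard : Fintype.card ι ≤ n := by
    have h1 : vectorSpan ℝ (Set.range z) ≤ (ℝ ∙ x)ᗮ := by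
      rw [vectorSpan_def, Submodule.span_le]
      rintro v ⟨a, ⟨i, rfl⟩, b, ⟨j, rfl⟩, rfl⟩
      rw [SetLike.mem_coe, Submodule.mem_orthogonal_singleton_iff_inner_right]
      show ⟪x, z i - z j⟫ = 0
      rw [inner_sub_right, heq i, heq j, sub_self]
    have h2 := hzaff.card_le_finrank_succ
    have h3 : finrank ℝ (vectorSpan ℝ (Set.range z)) ≤ finrank ℝ ((ℝ ∙ x)ᗮ) :=
      Submodule.finrank_mono h1
    have h4 : finrank ℝ (ℝ ∙ x) + finrank ℝ ((ℝ ∙ x)ᗮ)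
        = finrank ℝ (EuclideanSpace ℝ (Fin n)) :=
      Submodule.finrank_add_finrank_orthogonal _
    rw [finrank_span_singleton hx0, finrank_euclideanSpace_fin] at h4
    omega
  -- choose indices for the points z, and an index i₀ not used
  have hg' : ∀ i : ι, ∃ j, m j = z i := fun i => hzr (Set.mem_range_self i)
  choose g hg using hg'
  have hginj : Function.Injective g := fun a b hab =>
    hzaff.injective (by rw [← hg a, ← hg b, hab])
  have hgn : ¬ Function.Surjective g := by
    intro hs
    have := Fintype.card_le_of_surjective g hs
    rw [Fintype.card_fin] at this
    omega
  rw [Function.Surjective] at hgn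
  push_neg at hgn
  obtain ⟨i₀, hi₀⟩ := hgn
  -- find a point of M i₀ on the other side of the hyperplane
  have hm' : ∃ p ∈ M i₀, ⟪x, p⟫ ≤ 0 := by
    by_contra hcon
    push_neg at hcon
    have hlin : IsLinearMap ℝ (fun y : EuclideanSpace ℝ (Fin n) => ⟪x, y⟫) :=
      ⟨fun a b => inner_add_right x a b, fun c y => real_inner_smul_right x y c⟩
    have hsub : convexHull ℝ (↑(M i₀) : Set (EuclideanSpace ℝ (Fin n)))
        ⊆ {y | (0:ℝ) < ⟪x, y⟫} :=
      convexHull_min (fun p hp => hcon p hp) (convex_halfSpace_gt hlin 0)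
    have := hsub (h i₀)
    simp only [Set.mem_setOf_eq, inner_zero_right] at this
    exact lt_irrefl 0 this
  obtain ⟨p, hpM, hpx⟩ := hm'
  -- the updated transversal
  set m₂ := Function.update m i₀ p with hm₂def
  have hm₂M : ∀ i, m₂ i ∈ M i := by
    intro i
    by_cases hi : i = i₀
    · subst hi; rw [hm₂def, Function.update_self]; exact hpM
    · rw [hm₂def, Function.update_of_ne hi]; exact hmM i
  set K₂ : Set (EuclideanSpace ℝ (Fin n)) := convexHull ℝ (Set.range m₂) with hK₂def
  have hz₂ : ∀ i : ι, z i ∈ Set.range m₂ := by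
    intro i
    exact ⟨g i, by rw [hm₂def, Function.update_of_ne (hi₀ i), hg i]⟩
  have hxK₂ : x ∈ K₂ := by
    rw [← hzw]
    exact (convex_convexHull ℝ _).sum_mem (fun i _ => (hwpos i).le) hwsum
      (fun i _ => subset_convexHull ℝ _ (hz₂ i))
  have hpK₂ : p ∈ K₂ := subset_convexHull ℝ _ ⟨i₀, Function.update_self i₀ p m⟩
  -- move from x towards p to decrease the norm
  set q := ‖p - x‖ ^ 2 with hqdef
  have hq0 : (0:ℝ) ≤ q := sq_nonneg _
  have hc : ⟪x, p - x⟫ ≤ -‖x‖ ^ 2 := by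
    rw [inner_sub_right, real_inner_self_eq_norm_sq]
    linarith
  set t := min 1 (‖x‖ ^ 2 / (q + 1)) with htdef
  have ht0 : 0 < t := lt_min one_pos (by positivity)
  have ht1 : t ≤ 1 := min_le_left _ _
  have htq : t * (q + 1) ≤ ‖x‖ ^ 2 := by
    have h5 : t ≤ ‖x‖ ^ 2 / (q + 1) := min_le_right _ _
    rw [le_div_iff₀ (by linarith : (0:ℝ) < q + 1)] at h5
    exact h5
  set y := x + t • (p - x) with hydef
  have hyK₂ : y ∈ K₂ := by
    have hcomb : (1 - t) • x + t • p = y := by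
      rw [hydef, smul_sub, sub_smul, one_smul]
      abel
    rw [← hcomb]
    exact (convex_convexHull ℝ _) hxK₂ hpK₂ (by linarith) ht0.le (by ring)
  have hylt : ‖y‖ < ‖x‖ := by
    have hnormy : ‖y‖ ^ 2 = ‖x‖ ^ 2 + 2 * (t * ⟪x, p - x⟫) + t ^ 2 * q := by
      rw [hydef, norm_add_sq_real, real_inner_smul_right, norm_smul, mul_pow,
        Real.norm_eq_abs, sq_abs, hqdef]
    have hlt : ‖y‖ ^ 2 < ‖x‖ ^ 2 := by
      rw [hnormy]
      nlinarith [mul_pos ht0 hnormsq]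
    nlinarith [norm_nonneg y, norm_nonneg x]
  have hinf2 : infDist 0 K₂ < infDist 0 K := by
    calc infDist 0 K₂ ≤ dist 0 y := infDist_le_dist_of_mem hyK₂
    _ = ‖y‖ := by rw [dist_zero_left]
    _ < ‖x‖ := hylt
    _ = dist 0 x := (dist_zero_left x).symm
    _ = infDist 0 K := hxdist.symm
  exact absurd hinf2 (not_lt.2 (hmin m₂ (Fintype.mem_piFinset.2 hm₂M)))

theorem colorful_caratheodory (n : ℕ) (M : Fin (n + 1) → Finset (Fin n → ℝ))
    (h : ∀ i, (0 : Fin n → ℝ) ∈ convexHull ℝ (↑(M i) : Set (Fin n → ℝ))) :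
    ∃ m : Fin (n + 1) → (Fin n → ℝ), (∀ i, m i ∈ M i) ∧
      (0 : Fin n → ℝ) ∈ convexHull ℝ (Set.range m) := by
  classical
  set L : (Fin n → ℝ) ≃ₗ[ℝ] EuclideanSpace ℝ (Fin n) :=
    (WithLp.linearEquiv 2 ℝ (Fin n → ℝ)).symm with hLdef
  obtain ⟨m', hm'M, hm'0⟩ := colorful_aux n (fun i => (M i).image L) (fun i => by
    have h2 : L 0 ∈ L '' (convexHull ℝ (↑(M i) : Set (Fin n → ℝ))) :=
      ⟨0, h i, rfl⟩
    rw [equiv_image_convexHull] at h2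
    simpa [Finset.coe_image, map_zero] using h2)
  refine ⟨fun i => L.symm (m' i), fun i => ?_, ?_⟩
  · obtain ⟨p, hp, hpe⟩ := Finset.mem_image.1 (hm'M i)
    show L.symm (m' i) ∈ M i
    rw [← hpe, LinearEquiv.symm_apply_apply]
    exact hp
  · have h2 : L.symm 0 ∈ L.symm '' (convexHull ℝ (Set.range m')) := ⟨0, hm'0, rfl⟩
    rw [equiv_image_convexHull] at h2
    have hr : (L.symm : EuclideanSpace ℝ (Fin n) → (Fin n → ℝ)) '' Set.range m'
        = Set.range (fun i => L.symm (m' i)) := by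
      rw [← Set.range_comp]; rfl
    rw [hr] at h2
    simpa [map_zero] using h2
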